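/- For all β > 0 and t > 0, lim_{x → 0⁺} ( ∫₀^t e^{−βs}·(4πs)^{−1}·e^{−x²/(2s)} ds ) / log(1/x) = 1/(2π). Equivalently, ∫₀^t e^{−βs} P_{2s}(√2·z) ds ∼ log(|z|^{−1})/(2π) as z → 0 in ℝ² ∖ {0}. -/

import Mathlib

open MeasureTheory Set Filter Topology

noncomputable def Fk (β x s : ℝ) : ℝ :=
  Real.exp (-β * s) * (4 * Real.pi * s)⁻¹ * Real.exp (-x ^ 2 / (2 * s))

lemma exp_neg_le_inv {y : ℝ} (hy : 0 < y) : Real.exp (-y) ≤ y⁻¹ := by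
  rw [Real.exp_neg]
  exact inv_anti₀ hy (by linarith [Real.add_one_le_exp y])

lemma Fk_nonneg {β x s : ℝ} (hs : 0 < s) : 0 ≤ Fk β x s := by
  unfold Fk
  positivity

lemma Fk_meas (β x : ℝ) : Measurable (Fk β x) := by
  unfold Fk; fun_prop

lemma Fk_le {β x s : ℝ} (hβ : 0 < β) (hx : 0 < x) (hs : 0 < s) :
    Fk β x s ≤ (2 * Real.pi * x ^ 2)⁻¹ := by
  unfold Fk
  have h1 : Real.exp (-β * s) ≤ 1 := by
    rw [Real.exp_le_one_iff]; nlinarith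
  have h2 : Real.exp (-x ^ 2 / (2 * s)) ≤ (x ^ 2 / (2 * s))⁻¹ := by
    rw [neg_div]; exact exp_neg_le_inv (by positivity)
  have h3 : (4 * Real.pi * s)⁻¹ * (x ^ 2 / (2 * s))⁻¹ = (2 * Real.pi * x ^ 2)⁻¹ := by
    field_simp; ring
  calc Real.exp (-β * s) * (4 * Real.pi * s)⁻¹ * Real.exp (-x ^ 2 / (2 * s))
      ≤ 1 * (4 * Real.pi * s)⁻¹ * (x ^ 2 / (2 * s))⁻¹ := by
        apply mul_le_mul (mul_le_mul h1 le_rfl (by positivity) (by norm_num)) h2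
          (Real.exp_nonneg _)
        positivity
    _ = (2 * Real.pi * x ^ 2)⁻¹ := by rw [one_mul, h3]

lemma Fk_integrable {β t x : ℝ} (hβ : 0 < β) (hx : 0 < x) (ht : 0 < t) :
    IntegrableOn (Fk β x) (Ioc 0 t) := by
  refine Measure.integrableOn_of_bounded (M := (2 * Real.pi * x ^ 2)⁻¹)
    measure_Ioc_lt_top.ne (Fk_meas β x).aestronglyMeasurable ?_
  filter_upwards [ae_restrict_mem measurableSet_Ioc] with s hs
  rw [Real.norm_eq_abs, abs_of_nonneg (Fk_nonneg hs.1)]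
  exact Fk_le hβ hx hs.1

lemma Fk_upper {β t x : ℝ} (hβ : 0 < β) (hx : 0 < x) (hxt : x ^ 2 < t) :
    ∫ s in Ioo (0:ℝ) t, Fk β x s ≤
      1 / (2 * Real.pi) + (Real.log t + 2 * Real.log (1 / x)) / (4 * Real.pi) := by
  have hx2 : (0:ℝ) < x ^ 2 := by positivity
  have ht : 0 < t := hx2.trans hxt
  rw [← integral_Ioc_eq_integral_Ioo,
    ← Ioc_union_Ioc_eq_Ioc hx2.le hxt.le,
    setIntegral_union (Ioc_disjoint_Ioc_of_le le_rfl) measurableSet_Ioc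
      ((Fk_integrable hβ hx ht).mono_set (by
        intro s hs; exact ⟨hs.1, hs.2.trans hxt.le⟩))
      ((Fk_integrable hβ hx ht).mono_set (by
        intro s hs; exact ⟨hx2.trans hs.1, hs.2⟩))]
  have h1 : ∫ s in Ioc (0:ℝ) (x ^ 2), Fk β x s ≤ 1 / (2 * Real.pi) := by
    calc ∫ s in Ioc (0:ℝ) (x ^ 2), Fk β x s
        ≤ ∫ _ in Ioc (0:ℝ) (x ^ 2), (2 * Real.pi * x ^ 2)⁻¹ := by
          apply setIntegral_mono_on
          · exact (Fk_integrable hβ hx ht).mono_set (by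
              intro s hs; exact ⟨hs.1, hs.2.trans hxt.le⟩)
          · exact integrableOn_const measure_Ioc_lt_top.ne
          · exact measurableSet_Ioc
          · intro s hs; exact Fk_le hβ hx hs.1
      _ = 1 / (2 * Real.pi) := by
          rw [setIntegral_const, Measure.real, Real.volume_Ioc, smul_eq_mul]
          rw [ENNReal.toReal_ofReal (by nlinarith [sq_nonneg x])]
          field_simp
          ring
  have h2 : ∫ s in Ioc (x ^ 2) t, Fk β x s ≤
      (Real.log t + 2 * Real.log (1 / x)) / (4 * Real.pi) := by
    calc ∫ s in Ioc (x ^ 2) t, Fk β x s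
        ≤ ∫ s in Ioc (x ^ 2) t, (4 * Real.pi * s)⁻¹ := by
          apply setIntegral_mono_on
          · exact (Fk_integrable hβ hx ht).mono_set (by
              intro s hs; exact ⟨hx2.trans hs.1, hs.2⟩)
          · rw [← intervalIntegrable_iff_integrableOn_Ioc_of_le hxt.le]
            apply intervalIntegral.intervalIntegrable_inv
            · intro s hs
              rw [uIcc_of_le hxt.le] at hs
              have hs0 : 0 < s := lt_of_lt_of_le hx2 hs.1
              positivity
            · fun_prop
          · exact measurableSet_Ioc
          · intro s hs
            have hs0 : 0 < s := hx2.trans hs.1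
            have e1 : Real.exp (-β * s) ≤ 1 := by
              rw [Real.exp_le_one_iff]; nlinarith
            have e2 : Real.exp (-x ^ 2 / (2 * s)) ≤ 1 := by
              rw [Real.exp_le_one_iff]
              rw [neg_div]
              simp only [Left.neg_nonpos_iff]
              positivity
            unfold Fk
            calc Real.exp (-β * s) * (4 * Real.pi * s)⁻¹ * Real.exp (-x ^ 2 / (2 * s))
                ≤ 1 * (4 * Real.pi * s)⁻¹ * 1 := by
                  apply mul_le_mul (mul_le_mul e1 le_rfl (by positivity) (by norm_num)) e2
                    (Real.exp_nonneg _)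
                  positivity
              _ = (4 * Real.pi * s)⁻¹ := by ring
      _ = (Real.log t + 2 * Real.log (1 / x)) / (4 * Real.pi) := by
          rw [← intervalIntegral.integral_of_le hxt.le]
          have : ∀ s : ℝ, (4 * Real.pi * s)⁻¹ = (4 * Real.pi)⁻¹ * s⁻¹ := by
            intro s; rw [mul_inv]
          simp_rw [this]
          rw [intervalIntegral.integral_const_mul, integral_inv_of_pos hx2 ht,
            Real.log_div ht.ne' hx2.ne', Real.log_pow]
          rw [one_div, Real.log_inv]
          push_cast
          field_simp
          ring
  linarith

lemma Fk_lower {β t x a b : ℝ} (hβ : 0 < β) (hx : 0 < x) (ha : 0 < a) (hab : a ≤ b)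
    (hbt : b < t) (hax : x ^ 2 ≤ a * b) :
    Real.exp (-β * b) * Real.exp (-b / 2) * ((Real.log b - Real.log a) / (4 * Real.pi)) ≤
      ∫ s in Ioo (0:ℝ) t, Fk β x s := by
  have hb : 0 < b := ha.trans_le hab
  have ht : 0 < t := hb.trans hbt
  rw [← integral_Ioc_eq_integral_Ioo]
  set c : ℝ := Real.exp (-β * b) * Real.exp (-b / 2) with hc
  have hc0 : 0 < c := by positivity
  have key : c * ((Real.log b - Real.log a) / (4 * Real.pi)) =
      ∫ s in Ioc a b, c * (4 * Real.pi * s)⁻¹ := by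
    rw [← intervalIntegral.integral_of_le hab]
    have : ∀ s : ℝ, c * (4 * Real.pi * s)⁻¹ = (c * (4 * Real.pi)⁻¹) * s⁻¹ := by
      intro s; rw [mul_inv]; ring
    simp_rw [this]
    rw [intervalIntegral.integral_const_mul, integral_inv_of_pos ha hb,
      Real.log_div hb.ne' ha.ne']
    field_simp
  rw [key]
  have step2 : ∫ s in Ioc a b, c * (4 * Real.pi * s)⁻¹ ≤ ∫ s in Ioc a b, Fk β x s := by
    apply setIntegral_mono_on
    · rw [← intervalIntegrable_iff_integrableOn_Ioc_of_le hab]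
      apply IntervalIntegrable.const_mul
      apply intervalIntegral.intervalIntegrable_inv
      · intro s hs
        rw [uIcc_of_le hab] at hs
        have hs0 : 0 < s := lt_of_lt_of_le ha hs.1
        positivity
      · fun_prop
    · exact (Fk_integrable hβ hx ht).mono_set (fun s hs => ⟨ha.trans hs.1, hs.2.trans hbt.le⟩)
    · exact measurableSet_Ioc
    · intro s hs
      have hs0 : 0 < s := ha.trans hs.1
      have e1 : Real.exp (-β * b) ≤ Real.exp (-β * s) := by
        apply Real.exp_le_exp.2; nlinarith [hs.2]
      have e2 : Real.exp (-b / 2) ≤ Real.exp (-x ^ 2 / (2 * s)) := by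
        apply Real.exp_le_exp.2
        rw [div_le_div_iff₀ (by norm_num) (by positivity)]
        have : x ^ 2 ≤ s * b := le_trans hax (by nlinarith [hs.1, hb.le])
        nlinarith
      unfold Fk
      calc c * (4 * Real.pi * s)⁻¹
          = Real.exp (-β * b) * (4 * Real.pi * s)⁻¹ * Real.exp (-b / 2) := by rw [hc]; ring
        _ ≤ Real.exp (-β * s) * (4 * Real.pi * s)⁻¹ * Real.exp (-x ^ 2 / (2 * s)) := by
            apply mul_le_mul (mul_le_mul e1 le_rfl (by positivity) (Real.exp_nonneg _)) e2
              (Real.exp_nonneg _)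
            positivity
  refine step2.trans (setIntegral_mono_set (Fk_integrable hβ hx ht) ?_ ?_)
  · filter_upwards [ae_restrict_mem measurableSet_Ioc] with s hs
    exact Fk_nonneg hs.1
  · exact HasSubset.Subset.eventuallyLE (fun s hs => ⟨ha.trans hs.1, hs.2.trans hbt.le⟩)

lemma L_tendsto : Tendsto (fun x : ℝ => Real.log (1 / x)) (𝓝[>] 0) atTop := by
  have h1 : Tendsto (fun x : ℝ => -Real.log x) (𝓝[>] 0) atTop :=
    tendsto_neg_atBot_atTop.comp Real.tendsto_log_nhdsGT_zero
  refine h1.congr (fun x => ?_)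
  rw [one_div, Real.log_inv]

lemma xL_tendsto : Tendsto (fun x : ℝ => x * Real.log (1 / x)) (𝓝[>] 0) (𝓝 0) := by
  have h1 : Tendsto (fun y : ℝ => Real.log y / y) atTop (𝓝 0) :=
    Real.isLittleO_log_id_atTop.tendsto_div_nhds_zero
  have h2 := h1.comp tendsto_inv_nhdsGT_zero
  refine h2.congr' ?_
  filter_upwards [self_mem_nhdsWithin] with x (hx : 0 < x)
  simp only [Function.comp]
  rw [one_div, div_eq_mul_inv, inv_inv, mul_comm]

theorem stmt16 (β t : ℝ) (hβ : 0 < β) (ht : 0 < t) :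
    Tendsto
      (fun x : ℝ =>
        (∫ s in Set.Ioo (0 : ℝ) t,
            Real.exp (-β * s) * (4 * Real.pi * s)⁻¹ * Real.exp (-x ^ 2 / (2 * s))) /
          Real.log (1 / x))
      (nhdsWithin 0 (Set.Ioi 0)) (nhds (1 / (2 * Real.pi))) := by
  have hπ : 0 < Real.pi := Real.pi_pos
  set L : ℝ → ℝ := fun x => Real.log (1 / x) with hLdef
  -- lower quotient function of L
  set g : ℝ → ℝ := fun l => Real.exp (-β * l⁻¹) * Real.exp (-l⁻¹ / 2) *
      ((2 * l - 2 * Real.log l) / (4 * Real.pi)) / l with hgdef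
  have hg : Tendsto g atTop (𝓝 (1 / (2 * Real.pi))) := by
    have hA : Tendsto (fun l : ℝ => Real.exp (-β * l⁻¹)) atTop (𝓝 1) := by
      have : Tendsto (fun l : ℝ => -β * l⁻¹) atTop (𝓝 0) := by
        simpa using tendsto_inv_atTop_zero.const_mul (-β)
      simpa [Function.comp_def] using (Real.continuous_exp.tendsto 0).comp this
    have hB : Tendsto (fun l : ℝ => Real.exp (-l⁻¹ / 2)) atTop (𝓝 1) := by
      have : Tendsto (fun l : ℝ => -l⁻¹ / 2) atTop (𝓝 0) := by
        have := tendsto_inv_atTop_zero (𝕜 := ℝ)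
        simpa using (this.neg.div_const 2)
      simpa [Function.comp_def] using (Real.continuous_exp.tendsto 0).comp this
    have hC : Tendsto (fun l : ℝ => (2 - 2 * (Real.log l / l)) / (4 * Real.pi)) atTop
        (𝓝 (2 / (4 * Real.pi))) := by
      have h1 : Tendsto (fun l : ℝ => 2 - 2 * (Real.log l / l)) atTop (𝓝 2) := by
        have := Real.isLittleO_log_id_atTop.tendsto_div_nhds_zero
        have h2 := (this.const_mul 2).const_sub 2
        simpa using h2
      simpa using h1.div_const (4 * Real.pi)
    have hprod : Tendsto (fun l : ℝ => Real.exp (-β * l⁻¹) * Real.exp (-l⁻¹ / 2) *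
        ((2 - 2 * (Real.log l / l)) / (4 * Real.pi))) atTop (𝓝 (1 / (2 * Real.pi))) := by
      have := (hA.mul hB).mul hC
      have heq : (1:ℝ) * 1 * (2 / (4 * Real.pi)) = 1 / (2 * Real.pi) := by
        field_simp; ring
      rwa [heq] at this
    refine hprod.congr' ?_
    filter_upwards [eventually_gt_atTop (0:ℝ)] with l hl
    rw [hgdef]
    field_simp
  -- upper quotient function of L
  set u : ℝ → ℝ := fun l => (1 / (2 * Real.pi) + (Real.log t + 2 * l) / (4 * Real.pi)) / l
    with hudef
  have hu : Tendsto u atTop (𝓝 (1 / (2 * Real.pi))) := by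
    have h1 : Tendsto (fun l : ℝ => (1 / (2 * Real.pi) + Real.log t / (4 * Real.pi)) * l⁻¹
        + 1 / (2 * Real.pi)) atTop (𝓝 (1 / (2 * Real.pi))) := by
      have := (tendsto_inv_atTop_zero.const_mul
        (1 / (2 * Real.pi) + Real.log t / (4 * Real.pi))).add_const (1 / (2 * Real.pi))
      simpa using this
    refine h1.congr' ?_
    filter_upwards [eventually_gt_atTop (0:ℝ)] with l hl
    rw [hudef]
    field_simp
    ring
  have hL : Tendsto L (𝓝[>] 0) atTop := L_tendsto
  -- eventual bounds
  have hxL := xL_tendsto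
  have hev1 : ∀ᶠ x in 𝓝[>] (0:ℝ), 0 < x := self_mem_nhdsWithin
  have hev2 : ∀ᶠ x in 𝓝[>] (0:ℝ), 1 < L x := hL.eventually (eventually_gt_atTop 1)
  have hev3 : ∀ᶠ x in 𝓝[>] (0:ℝ), t⁻¹ < L x := hL.eventually (eventually_gt_atTop t⁻¹)
  have hev4 : ∀ᶠ x in 𝓝[>] (0:ℝ), x * L x < 1 := hxL.eventually_lt_const one_pos
  have hev5 : ∀ᶠ x in 𝓝[>] (0:ℝ), x ^ 2 < t := by
    have hsq : Tendsto (fun x : ℝ => x ^ 2) (𝓝[>] 0) (𝓝 0) := by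
      have : Tendsto (fun x : ℝ => x ^ 2) (𝓝 0) (𝓝 0) := by
        simpa using (continuous_pow 2).tendsto (0:ℝ)
      exact this.mono_left nhdsWithin_le_nhds
    exact hsq.eventually_lt_const ht
  -- squeeze
  refine tendsto_of_tendsto_of_tendsto_of_le_of_le' (hg.comp hL) (hu.comp hL) ?_ ?_
  · -- lower bound
    filter_upwards [hev1, hev2, hev3, hev4] with x hx hL1 hLt hxL1
    have hL0 : 0 < L x := one_pos.trans hL1
    have hlogx : Real.log x = -L x := by
      rw [hLdef]; simp [Real.log_inv]
    set a : ℝ := x ^ 2 * L x with hadef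
    set b : ℝ := (L x)⁻¹ with hbdef
    have ha : 0 < a := by positivity
    have hb : 0 < b := by positivity
    have hab : a ≤ b := by
      rw [hadef, hbdef]
      have h1 : x * L x ≥ 0 := by positivity
      have h2 : (L x) * (L x)⁻¹ = 1 := mul_inv_cancel₀ hL0.ne'
      nlinarith [mul_pos hL0 hL0]
    have hbt : b < t := by
      rw [hbdef]
      rwa [inv_lt_comm₀ hL0 ht]
    have hax : x ^ 2 ≤ a * b := by
      rw [hadef, hbdef, mul_assoc, mul_inv_cancel₀ hL0.ne', mul_one]
    have hlow := Fk_lower (t := t) hβ hx ha hab hbt hax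
    have hlogs : Real.log b - Real.log a = 2 * L x - 2 * Real.log (L x) := by
      rw [hbdef, hadef, Real.log_inv, Real.log_mul (by positivity) hL0.ne',
        Real.log_pow, hlogx]
      push_cast
      ring
    have hgx : g (L x) = Real.exp (-β * b) * Real.exp (-b / 2) *
        ((Real.log b - Real.log a) / (4 * Real.pi)) / L x := by
      rw [hgdef, hlogs, hbdef]
    rw [Function.comp_apply, hgx]
    exact (div_le_div_iff_of_pos_right hL0).2 hlow
  · -- upper bound
    filter_upwards [hev1, hev2, hev5] with x hx hL1 hxt
    have hL0 : 0 < L x := one_pos.trans hL1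
    have hup := Fk_upper (t := t) hβ hx hxt
    rw [Function.comp_apply, hudef]
    have : (∫ s in Set.Ioo (0:ℝ) t,
        Real.exp (-β * s) * (4 * Real.pi * s)⁻¹ * Real.exp (-x ^ 2 / (2 * s))) =
        ∫ s in Set.Ioo (0:ℝ) t, Fk β x s := rfl
    rw [this]
    exact (div_le_div_iff_of_pos_right hL0).2 hup
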